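/- Let G be a graph on n vertices with m edges whose complement G^C is connected. Then ρ_D(G^C) ≥ 2(n−1) + 4m/n. -/

import Mathlib

open SimpleGraph Finset

/-- The transmission of a vertex: sum of distances to all other vertices. -/
noncomputable def transmission {V : Type*} [Fintype V] (G : SimpleGraph V) (u : V) : ℕ :=
  ∑ v, G.dist u v

/-- The transmission σ(G): sum of distances over all unordered pairs. -/
noncomputable def transmissionOf {V : Type*} [Fintype V] (G : SimpleGraph V) : ℝ :=
  (1 / 2) * ∑ u, ∑ v, (G.dist u v : ℝ)

/-- The distance signless Laplacian matrix Q_D(G) = Tr(G) + 𝒟(G). -/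
noncomputable def distSignlessLaplacian {V : Type*} [Fintype V] [DecidableEq V]
    (G : SimpleGraph V) : Matrix V V ℝ :=
  fun u v => (if u = v then (transmission G u : ℝ) else 0) + (G.dist u v : ℝ)

/-- `ρ` is the distance signless Laplacian spectral radius of `G`,
i.e. the largest eigenvalue of `Q_D(G)`. -/
noncomputable def IsDistSLSpectralRadius {V : Type*} [Fintype V] [DecidableEq V]
    (G : SimpleGraph V) (ρ : ℝ) : Prop :=
  IsGreatest {μ : ℝ | Module.End.HasEigenvalue (Matrix.toLin' (distSignlessLaplacian G)) μ} ρ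

/-- Join of two graphs. -/
def joinGraph {α β : Type*} (G : SimpleGraph α) (H : SimpleGraph β) : SimpleGraph (α ⊕ β) :=
  SimpleGraph.fromRel (fun x y =>
    match x, y with
    | Sum.inl a, Sum.inl b => G.Adj a b
    | Sum.inr a, Sum.inr b => H.Adj a b
    | Sum.inl _, Sum.inr _ => True
    | Sum.inr _, Sum.inl _ => False)

/-- The graph H_{t,n-t}. -/
def HGraph (n t : ℕ) : SimpleGraph (Fin n ⊕ Fin n) :=
  SimpleGraph.fromRel (fun x y =>
    match x, y with
    | Sum.inl i, Sum.inr j => (j : ℕ) < n - t ∨ (i : ℕ) < t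
    | _, _ => False)

/-- Hamilton-connected. -/
def IsHamiltonianConnected {V : Type*} [DecidableEq V] (G : SimpleGraph V) : Prop :=
  ∀ u v : V, u ≠ v → ∃ p : G.Walk u v, p.IsHamiltonian

/-- Traceable from every vertex. -/
def TraceableFromEveryVertex {V : Type*} [DecidableEq V] (G : SimpleGraph V) : Prop :=
  ∀ u : V, ∃ v : V, ∃ p : G.Walk u v, p.IsHamiltonian

/-- K_{n-1} + e : complete graph on n-1 vertices with a pendant edge. -/
def KPlusPendant (n : ℕ) : SimpleGraph (Fin (n - 1) ⊕ Fin 1) :=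
  SimpleGraph.fromRel (fun x y =>
    match x, y with
    | Sum.inl a, Sum.inl b => a ≠ b
    | Sum.inl a, Sum.inr _ => (a : ℕ) = 0
    | _, _ => False)

open Matrix

lemma aux_rayleigh {V : Type*} [Fintype V] [DecidableEq V] (A : Matrix V V ℝ)
    (hA : A.IsHermitian) (ρ : ℝ)
    (hρ : ∀ μ : ℝ, Module.End.HasEigenvalue (Matrix.toLin' A) μ → μ ≤ ρ)
    (x : V → ℝ) : x ⬝ᵥ (A *ᵥ x) ≤ ρ * (x ⬝ᵥ x) := by
  have heig : ∀ i, hA.eigenvalues i ≤ ρ := by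
    intro i
    apply hρ
    have h1 : hA.eigenvalues i ∈ spectrum ℝ A := hA.eigenvalues_mem_spectrum_real i
    have h2 : spectrum ℝ (Matrix.toLinAlgEquiv' A) = spectrum ℝ A :=
      AlgEquiv.spectrum_eq Matrix.toLinAlgEquiv' A
    have h3 : Matrix.toLin' A = Matrix.toLinAlgEquiv' A := rfl
    rw [h3]
    exact Module.End.HasEigenvalue.of_mem_spectrum (h2 ▸ h1)
  set U : Matrix V V ℝ := (hA.eigenvectorUnitary : Matrix V V ℝ) with hU
  set y : V → ℝ := star U *ᵥ x with hy
  have hUs : U * star U = 1 := (Matrix.mem_unitaryGroup_iff).mp hA.eigenvectorUnitary.2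
  have hstar : star U = Uᵀ := by ext i j; simp [Matrix.conjTranspose_apply]
  have hdot : ∀ w : V → ℝ, x ⬝ᵥ (U *ᵥ w) = y ⬝ᵥ w := by
    intro w
    rw [Matrix.dotProduct_mulVec, hy, hstar, Matrix.mulVec_transpose]
  have hxx : y ⬝ᵥ y = x ⬝ᵥ x := by
    calc y ⬝ᵥ y = x ⬝ᵥ (U *ᵥ y) := (hdot y).symm
    _ = x ⬝ᵥ ((U * star U) *ᵥ x) := by rw [hy, Matrix.mulVec_mulVec]
    _ = x ⬝ᵥ x := by rw [hUs, Matrix.one_mulVec]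
  have hAx : x ⬝ᵥ (A *ᵥ x) = ∑ i, hA.eigenvalues i * (y i)^2 := by
    conv_lhs => rw [hA.spectral_theorem, Unitary.conjStarAlgAut_apply]
    rw [← Matrix.mulVec_mulVec, ← Matrix.mulVec_mulVec, hdot]
    rw [← hU, ← hy, dotProduct_comm]
    simp only [dotProduct, Matrix.mulVec_diagonal, Function.comp_apply,
      RCLike.ofReal_real_eq_id, id_eq]
    exact Finset.sum_congr rfl fun i _ => by ring
  rw [hAx, ← hxx]
  have : ∑ i, hA.eigenvalues i * (y i)^2 ≤ ∑ i, ρ * (y i)^2 :=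
    Finset.sum_le_sum fun i _ => mul_le_mul_of_nonneg_right (heig i) (sq_nonneg _)
  calc ∑ i, hA.eigenvalues i * (y i)^2 ≤ ∑ i, ρ * (y i)^2 := this
  _ = ρ * (y ⬝ᵥ y) := by rw [← Finset.mul_sum]; congr 1; simp [dotProduct, sq]
/-- ρ_D(Gᶜ) ≥ 2(n-1) + 4m/n when the complement of G is connected. -/
theorem stmt_17 {V : Type*} [Fintype V] [DecidableEq V] (G : SimpleGraph V) [DecidableRel G.Adj]
    (hconn : Gᶜ.Connected) (ρ : ℝ) (hρ : IsDistSLSpectralRadius Gᶜ ρ) :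
    2 * ((Fintype.card V : ℝ) - 1) +
      4 * (G.edgeFinset.card : ℝ) / (Fintype.card V : ℝ) ≤ ρ := by
  have hne : Nonempty V := hconn.nonempty
  set n : ℕ := Fintype.card V with hn
  have hnR : (0:ℝ) < n := by exact_mod_cast Fintype.card_pos (α := V)
  set Q : Matrix V V ℝ := distSignlessLaplacian Gᶜ with hQdef
  have hQ : Q.IsHermitian := by
    ext i j
    by_cases h : i = j
    · subst h; rfl
    · simp [hQdef, distSignlessLaplacian, Matrix.conjTranspose_apply, h, Ne.symm h,
        SimpleGraph.dist_comm]
  set x : V → ℝ := fun _ => 1 with hx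
  have hupper : x ⬝ᵥ (Q *ᵥ x) ≤ ρ * n := by
    have h1 : x ⬝ᵥ x = n := by simp [hx, dotProduct, ← hn]
    have := aux_rayleigh Q hQ ρ (fun μ hμ => hρ.2 hμ) x
    rwa [h1] at this
  set m : ℕ := G.edgeFinset.card with hm
  -- lower bound on the quadratic form
  have hxQx : x ⬝ᵥ (Q *ᵥ x) = 2 * ∑ u, ∑ v, (Gᶜ.dist u v : ℝ) := by
    simp only [dotProduct, Matrix.mulVec, hx, one_mul, mul_one, hQdef,
      distSignlessLaplacian, Finset.sum_add_distrib]
    rw [two_mul]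
    congr 1
    refine Finset.sum_congr rfl fun u _ => ?_
    rw [Finset.sum_ite_eq]
    simp [transmission, Nat.cast_sum]
  have key : ∀ u v : V, (if u = v then (0:ℝ) else 1) + (if G.Adj u v then 1 else 0) ≤
      (Gᶜ.dist u v : ℝ) := by
    intro u v
    by_cases h : u = v
    · subst h; simp [G.irrefl]
    · have h1 : 1 ≤ Gᶜ.dist u v := hconn.pos_dist_of_ne h
      by_cases ha : G.Adj u v
      · have hne1 : Gᶜ.dist u v ≠ 1 := by
          intro he
          exact (SimpleGraph.dist_eq_one_iff_adj.mp he).2 ha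
        have h2 : 2 ≤ Gᶜ.dist u v := by omega
        simp only [h, ha, if_false, if_true]
        exact_mod_cast h2
      · simp only [h, ha, if_false, if_true]
        norm_num
        exact_mod_cast h1
  have hsum1 : ∑ u : V, ∑ v : V, (if u = v then (0:ℝ) else 1) = n * (n - 1) := by
    have : ∀ u : V, ∑ v : V, (if u = v then (0:ℝ) else 1) = (n:ℝ) - 1 := by
      intro u
      have : ∀ v : V, (if u = v then (0:ℝ) else 1) = 1 - (if u = v then 1 else 0) := by
        intro v; by_cases h : u = v <;> simp [h]
      simp [this, Finset.sum_sub_distrib, Finset.sum_ite_eq, ← hn]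
    simp [this, Finset.sum_const, mul_comm, ← hn]; ring
  have hsum2 : ∑ u : V, ∑ v : V, (if G.Adj u v then (1:ℝ) else 0) = 2 * m := by
    have h1 : ∀ u : V, ∑ v : V, (if G.Adj u v then (1:ℝ) else 0) = (G.degree u : ℝ) := by
      intro u
      rw [Finset.sum_boole]
      congr 1
      rw [SimpleGraph.degree]
      congr 1
      ext v
      simp [SimpleGraph.mem_neighborFinset]
    simp only [h1]
    rw [← Nat.cast_sum]
    rw [SimpleGraph.sum_degrees_eq_twice_card_edges]
    push_cast
    ring
  have hlow : 2 * ((n:ℝ) * (n - 1) + 2 * m) ≤ x ⬝ᵥ (Q *ᵥ x) := by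
    rw [hxQx]
    have : (n:ℝ) * (n - 1) + 2 * m ≤ ∑ u, ∑ v, (Gᶜ.dist u v : ℝ) := by
      calc (n:ℝ) * (n - 1) + 2 * m
          = ∑ u : V, ∑ v : V, ((if u = v then (0:ℝ) else 1) + (if G.Adj u v then 1 else 0)) := by
            simp only [Finset.sum_add_distrib, hsum1, hsum2]
        _ ≤ ∑ u, ∑ v, (Gᶜ.dist u v : ℝ) :=
            Finset.sum_le_sum fun u _ => Finset.sum_le_sum fun v _ => key u v
    linarith
  have hfinal : (2 * ((n:ℝ) - 1) + 4 * m / n) * n ≤ ρ * n := by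
    have heq : (2 * ((n:ℝ) - 1) + 4 * m / n) * n = 2 * ((n:ℝ) * (n - 1) + 2 * m) := by
      field_simp; ring
    rw [heq]
    exact le_trans hlow hupper
  exact le_of_mul_le_mul_right hfinal hnR
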